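/- The matrix K − K²·Kᴴ equals the 2×2 matrix with rows (−3/8, −3/16) and (3/8, 3/16), and its operator norm (induced by the Euclidean norm on ℂ²) equals 3√10/16, which is strictly less than 1. (This is the quantitative heart of the paper's proof that the stated C*-cover of the disc algebra is not α-admissible: since star-automorphisms are isometric, no automorphism can carry the norm-one element (0, N) to an element of norm 3√10/16.) -/

import Mathlib

open scoped Matrix.Norms.L2Operator
open Matrix

noncomputable section

/-- The matrix `K` with rows `(-1/2, 0)` and `(3/4, -1/2)`. -/
def K : Matrix (Fin 2) (Fin 2) ℂ := !![-(1/2), 0; 3/4, -(1/2)]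

private def M : Matrix (Fin 2) (Fin 2) ℂ := !![-(3/8), -(3/16); 3/8, 3/16]

private lemma hKM : K - K ^ 2 * Kᴴ = M := by
  ext i j
  fin_cases i <;> fin_cases j <;>
    simp [K, M, pow_two, Matrix.mul_apply, Matrix.conjTranspose_apply, Matrix.vecMul,
      dotProduct, Fin.sum_univ_two, map_div₀, map_ofNat, Complex.ext_iff] <;>
    norm_num

private lemma hMHM : Mᴴ * M = !![9/32, 9/64; 9/64, 9/128] := by
  ext i j
  fin_cases i <;> fin_cases j <;>
    simp [M, Matrix.mul_apply, Matrix.conjTranspose_apply, Matrix.vecMul,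
      dotProduct, Fin.sum_univ_two, map_div₀, map_ofNat, Complex.ext_iff] <;>
    norm_num

private lemma hNN : (Mᴴ * M) * (Mᴴ * M) = ((45/128 : ℂ)) • (Mᴴ * M) := by
  rw [hMHM]
  ext i j
  fin_cases i <;> fin_cases j <;>
    simp [Matrix.mul_apply, Fin.sum_univ_two] <;>
    ring

private lemma normN : ‖Mᴴ * M‖ = 45/128 := by
  have hsa : (Mᴴ * M)ᴴ = Mᴴ * M := by
    rw [Matrix.conjTranspose_mul, Matrix.conjTranspose_conjTranspose]
  have h1 : ‖(Mᴴ * M)ᴴ * (Mᴴ * M)‖ = ‖Mᴴ * M‖ * ‖Mᴴ * M‖ :=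
    Matrix.l2_opNorm_conjTranspose_mul_self _
  rw [hsa, hNN] at h1
  have h2 : ‖((45/128 : ℂ)) • (Mᴴ * M)‖ = (45/128) * ‖Mᴴ * M‖ := by
    rw [norm_smul]
    norm_num
  rw [h2] at h1
  have hne : ‖Mᴴ * M‖ ≠ 0 := by
    have : (Mᴴ * M) ≠ 0 := by
      rw [hMHM]
      intro h
      have := congrFun (congrFun h 0) 0
      simp at this
    simpa using this
  have h3 : ‖Mᴴ * M‖ * ‖Mᴴ * M‖ = (45/128) * ‖Mᴴ * M‖ := h1.symm
  exact mul_right_cancel₀ hne h3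

private lemma normM : ‖M‖ = 3 * Real.sqrt 10 / 16 := by
  have h1 : ‖M‖ * ‖M‖ = 45/128 := by
    rw [← Matrix.l2_opNorm_conjTranspose_mul_self, normN]
  have h10 : Real.sqrt 10 ^ 2 = 10 := Real.sq_sqrt (by norm_num)
  have h2 : (3 * Real.sqrt 10 / 16) * (3 * Real.sqrt 10 / 16) = 45/128 := by
    nlinarith [h10]
  have hnn : (0:ℝ) ≤ ‖M‖ := norm_nonneg _
  have hnn2 : (0:ℝ) ≤ 3 * Real.sqrt 10 / 16 := by positivity
  nlinarith [h1, h2]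

/-- The quantitative heart of the paper's proof: `K - K²·Kᴴ` equals the matrix with rows
`(-3/8, -3/16)` and `(3/8, 3/16)`, its operator norm (induced by the Euclidean norm on `ℂ²`)
is `3√10/16`, and `3√10/16 < 1`. -/
theorem K_computation :
    K - K ^ 2 * Kᴴ = !![-(3/8), -(3/16); 3/8, 3/16] ∧
      ‖K - K ^ 2 * Kᴴ‖ = 3 * Real.sqrt 10 / 16 ∧
      3 * Real.sqrt 10 / 16 < 1 := by
  refine ⟨hKM, ?_, ?_⟩
  · rw [hKM]; exact normM
  · have h10 : Real.sqrt 10 ^ 2 = 10 := Real.sq_sqrt (by norm_num)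
    nlinarith [Real.sqrt_nonneg 10]

end
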